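/- arXiv:1208.0353 — 2 statements merged into one kernel-verified Lean document; each statement's English description precedes it below -/
import Mathlib

section
/- (Update step bound) Let y = Ax + e where x is k-sparse in D, let T be an index set with |T| ≤ 3k, and let x̃ = argmin_{z ∈ R(D_T)} ‖y − Az‖. If A satisfies the D-RIP of order 4k with constant δ_{4k}, then ‖x − x̃‖ ≤ √((1+δ_{4k})/(1−δ_{4k})) ‖P_{T⊥} x‖ + (2/√(1−δ_{4k})) ‖e‖. -/
noncomputable section

abbrev Vec (n : ℕ) := EuclideanSpace ℂ (Fin n)

/-- Span of the columns of `D` indexed by `B`. -/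
def colSpan {n d : ℕ} (D : Vec d →L[ℂ] Vec n) (B : Finset (Fin d)) : Submodule ℂ (Vec n) :=
  Submodule.span ℂ ((fun j => D (EuclideanSpace.single j 1)) '' (B : Set (Fin d)))

/-- Orthogonal projection onto the span of the columns of `D` indexed by `B`. -/
def P {n d : ℕ} (D : Vec d →L[ℂ] Vec n) (B : Finset (Fin d)) (z : Vec n) : Vec n :=
  ((colSpan D B).orthogonalProjection z : Vec n)

open Classical in
/-- `α` has at most `k` nonzero entries. -/
def sparse {d : ℕ} (k : ℕ) (α : Vec d) : Prop :=
  (Finset.univ.filter fun i => α i ≠ 0).card ≤ k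

/-- `A` satisfies the `D`-RIP of order `k` with constant `δ`. -/
def DRIP {m n d : ℕ} (A : Vec n →L[ℂ] Vec m) (D : Vec d →L[ℂ] Vec n) (k : ℕ) (δ : ℝ) : Prop :=
  ∀ α : Vec d, sparse k α →
    Real.sqrt (1 - δ) * ‖D α‖ ≤ ‖A (D α)‖ ∧ ‖A (D α)‖ ≤ Real.sqrt (1 + δ) * ‖D α‖

lemma mem_colSpan_repr {n d : ℕ} (D : Vec d →L[ℂ] Vec n) (T : Finset (Fin d)) {v : Vec n}
    (hv : v ∈ colSpan D T) : ∃ β : Vec d, (∀ i, i ∉ T → β i = 0) ∧ D β = v := by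
  induction hv using Submodule.span_induction with
  | mem w hw =>
    obtain ⟨j, hj, rfl⟩ := hw
    refine ⟨EuclideanSpace.single j 1, fun i hi => ?_, rfl⟩
    simp [EuclideanSpace.single_apply]
    intro h; subst h; exact absurd hj hi
  | zero => exact ⟨0, fun i _ => rfl, by simp⟩
  | add w₁ w₂ _ _ h₁ h₂ =>
    obtain ⟨β₁, hs₁, rfl⟩ := h₁
    obtain ⟨β₂, hs₂, rfl⟩ := h₂
    exact ⟨β₁ + β₂, fun i hi => by simp [hs₁ i hi, hs₂ i hi], by simp⟩
  | smul c w _ h =>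
    obtain ⟨β, hs, rfl⟩ := h
    exact ⟨c • β, fun i hi => by simp [hs i hi], by simp⟩

open Classical in
lemma sparse_sub {d k : ℕ} {α β : Vec d} {T : Finset (Fin d)} (hα : sparse k α)
    (hβ : ∀ i, i ∉ T → β i = 0) (hT : T.card ≤ 3 * k) : sparse (4 * k) (α - β) := by
  have hsub : (Finset.univ.filter fun i => (α - β) i ≠ 0) ⊆
      (Finset.univ.filter fun i => α i ≠ 0) ∪ T := by
    intro i hi
    simp only [Finset.mem_filter, Finset.mem_univ, true_and] at hi
    by_contra h
    simp only [Finset.mem_union, Finset.mem_filter, Finset.mem_univ, true_and, not_or,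
      not_not] at h
    exact hi (by simp [h.1, hβ i h.2])
  calc (Finset.univ.filter fun i => (α - β) i ≠ 0).card
      ≤ ((Finset.univ.filter fun i => α i ≠ 0) ∪ T).card := Finset.card_le_card hsub
    _ ≤ _ + T.card := Finset.card_union_le _ _
    _ ≤ k + 3 * k := add_le_add hα hT
    _ = 4 * k := by ring

theorem stmt6 {m n d k : ℕ} (A : Vec n →L[ℂ] Vec m) (D : Vec d →L[ℂ] Vec n)
    (δ : ℝ) (hδ0 : 0 < δ) (hδ1 : δ < 1) (hRIP : DRIP A D (4 * k) δ)
    (x : Vec n) (α : Vec d) (hα : sparse k α) (hx : x = D α)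
    (e : Vec m) (y : Vec m) (hy : y = A x + e)
    (T : Finset (Fin d)) (hT : T.card ≤ 3 * k)
    (xt : Vec n) (hxtT : xt ∈ colSpan D T)
    (hxtMin : ∀ z ∈ colSpan D T, ‖y - A xt‖ ≤ ‖y - A z‖) :
    ‖x - xt‖ ≤ Real.sqrt ((1 + δ) / (1 - δ)) * ‖x - P D T x‖ +
      (2 / Real.sqrt (1 - δ)) * ‖e‖ := by
  have hs : (0:ℝ) < Real.sqrt (1 - δ) := Real.sqrt_pos.2 (by linarith)
  have hsp : (0:ℝ) ≤ Real.sqrt (1 + δ) := Real.sqrt_nonneg _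
  -- representations
  obtain ⟨β, hβ, hDβ⟩ := mem_colSpan_repr D T hxtT
  have hPmem : P D T x ∈ colSpan D T := ((colSpan D T).orthogonalProjection x).2
  obtain ⟨γ, hγ, hDγ⟩ := mem_colSpan_repr D T hPmem
  -- lower RIP bound on x - xt
  have h1 : D (α - β) = x - xt := by rw [map_sub, hDβ, hx]
  have hlow : Real.sqrt (1 - δ) * ‖x - xt‖ ≤ ‖A (x - xt)‖ := by
    have := (hRIP (α - β) (sparse_sub hα hβ hT)).1
    rwa [h1] at this
  -- upper RIP bound on x - Px
  have h2 : D (α - γ) = x - P D T x := by rw [map_sub, hDγ, hx]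
  have hup : ‖A (x - P D T x)‖ ≤ Real.sqrt (1 + δ) * ‖x - P D T x‖ := by
    have := (hRIP (α - γ) (sparse_sub hα hγ hT)).2
    rwa [h2] at this
  -- minimality
  have hmin : ‖y - A xt‖ ≤ ‖y - A (P D T x)‖ := hxtMin _ hPmem
  -- norm chain
  have hAx : A x = y - e := by rw [hy]; abel
  have hA1 : ‖A (x - xt)‖ ≤ ‖y - A xt‖ + ‖e‖ := by
    have : A (x - xt) = (y - A xt) - e := by rw [map_sub, hAx]; abel
    rw [this]; exact norm_sub_le _ _
  have hA2 : ‖y - A (P D T x)‖ ≤ ‖A (x - P D T x)‖ + ‖e‖ := by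
    have : y - A (P D T x) = A (x - P D T x) + e := by rw [map_sub, hAx]; abel
    rw [this]; exact norm_add_le _ _
  have key : Real.sqrt (1 - δ) * ‖x - xt‖ ≤
      Real.sqrt (1 + δ) * ‖x - P D T x‖ + 2 * ‖e‖ := by
    calc Real.sqrt (1 - δ) * ‖x - xt‖ ≤ ‖A (x - xt)‖ := hlow
      _ ≤ ‖y - A xt‖ + ‖e‖ := hA1
      _ ≤ ‖y - A (P D T x)‖ + ‖e‖ := by linarith
      _ ≤ ‖A (x - P D T x)‖ + ‖e‖ + ‖e‖ := by linarith
      _ ≤ Real.sqrt (1 + δ) * ‖x - P D T x‖ + 2 * ‖e‖ := by linarith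
  have hsqrt : Real.sqrt ((1 + δ) / (1 - δ)) = Real.sqrt (1 + δ) / Real.sqrt (1 - δ) :=
    Real.sqrt_div (by linarith) _
  rw [hsqrt]
  rw [div_mul_eq_mul_div, div_mul_eq_mul_div, ← add_div, le_div_iff₀ hs]
  linarith [key]
end
end

section
/- (Estimate/pruning step bound) Let x be k-sparse in D and x̃ ∈ ℂ^n arbitrary. Let Γ = S_D(x̃, k) be a near-optimal size-k support for x̃ with parameter ε₂, and set x^{ℓ+1} = P_Γ x̃. Then ‖x − x^{ℓ+1}‖ ≤ (2+ε₂)‖x − x̃‖. -/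
noncomputable section

theorem stmt7 {n d k : ℕ} (D : Vec d →L[ℂ] Vec n)
    (ε₂ : ℝ) (hε₂ : 0 ≤ ε₂)
    (x : Vec n) (α : Vec d) (hα : sparse k α) (hx : x = D α)
    (xt : Vec n)
    (Γopt Γ : Finset (Fin d)) (hΓoptCard : Γopt.card = k)
    (hopt : ∀ Λ : Finset (Fin d), Λ.card = k → ‖xt - P D Γopt xt‖ ≤ ‖xt - P D Λ xt‖)
    (hΓcard : Γ.card = k)
    (hnear : ‖P D Γopt xt - P D Γ xt‖ ≤ ε₂ * ‖xt - P D Γopt xt‖)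
    (xnext : Vec n) (hxnext : xnext = P D Γ xt) :
    ‖x - xnext‖ ≤ (2 + ε₂) * ‖x - xt‖ := by
  classical
  have hkd : k ≤ d := by
    calc k = Γopt.card := hΓoptCard.symm
    _ ≤ (Finset.univ : Finset (Fin d)).card := Finset.card_le_univ _
    _ = d := by simp
  obtain ⟨Λ, hsub, hΛcard⟩ := Finset.exists_superset_card_eq hα (by simpa using hkd)
  have hα_sum : α = ∑ j : Fin d, α j • EuclideanSpace.single j 1 := by
    ext i
    rw [show ((∑ j : Fin d, α j • EuclideanSpace.single j 1 : Vec d) i)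
        = ∑ j : Fin d, (α j • (EuclideanSpace.single j 1 : Vec d)) i from
      by rw [WithLp.ofLp_sum, Finset.sum_apply]]
    simp [EuclideanSpace.single_apply, Finset.sum_ite_eq']
  have hxmem : x ∈ colSpan D Λ := by
    rw [hx, hα_sum, map_sum]
    refine Submodule.sum_mem _ fun j _ => ?_
    by_cases hj : α j = 0
    · simp [hj]
    · rw [map_smul]
      refine Submodule.smul_mem _ _ (Submodule.subset_span ?_)
      exact ⟨j, by simpa using hsub (Finset.mem_filter.mpr ⟨Finset.mem_univ j, hj⟩), rfl⟩
  have hmin : ‖xt - P D Λ xt‖ ≤ ‖xt - x‖ := by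
    rw [P, ← Submodule.starProjection_apply, Submodule.starProjection_minimal]
    exact ciInf_le ⟨0, fun r ⟨v, hv⟩ => hv ▸ norm_nonneg _⟩ (⟨x, hxmem⟩ : colSpan D Λ)
  have h1 : ‖xt - P D Γopt xt‖ ≤ ‖x - xt‖ := by
    rw [norm_sub_rev x xt]
    exact (hopt Λ hΛcard).trans hmin
  have h2 : ‖x - xnext‖ ≤ ‖x - xt‖ + ‖xt - P D Γopt xt‖ + ‖P D Γopt xt - xnext‖ := by
    calc ‖x - xnext‖ = ‖(x - xt) + (xt - P D Γopt xt) + (P D Γopt xt - xnext)‖ := by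
          congr 1; abel
    _ ≤ _ := norm_add₃_le
  have h3 : ‖P D Γopt xt - xnext‖ ≤ ε₂ * ‖x - xt‖ := by
    rw [hxnext]
    exact hnear.trans (by nlinarith)
  nlinarith
end
end
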